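/- The relation A ≥ B defined by dom J_A* ⊆ dom J_B* and [J_A* y]²_A ≥ [J_B* y]²_B for all y ∈ dom J_A* is antisymmetric: if A ≥ B and B ≥ A then A = B. -/

import Mathlib

open scoped ComplexConjugate ComplexOrder InnerProductSpace
noncomputable section

/-- The conjugate dual of a complex normed space: continuous conjugate-linear
functionals. Pairing `(v, x) := v x`. -/
abbrev CDual (X : Type*) [NormedAddCommGroup X] [NormedSpace ℂ X] :=
  X →SL[starRingEnd ℂ] ℂ


/-- A densely defined operator `A : X → X*` is self-adjoint (`A = A*`):
it is densely defined, symmetric (`(Ax,y) = (x,Ay)` i.e. `A ⊆ A*`), and maximal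
(any `y` for which `x ↦ (Ax,y)` is represented by some `w ∈ X*` lies in `dom A`
with `Ay = w`, i.e. `A* ⊆ A`). -/
def IsSelfAdjointOp {X : Type*} [NormedAddCommGroup X] [NormedSpace ℂ X]
    (A : X →ₗ.[ℂ] CDual X) : Prop :=
  Dense (A.domain : Set X) ∧
  (∀ x y : A.domain, A x (y : X) = starRingEnd ℂ (A y (x : X))) ∧
  (∀ (y : X) (w : CDual X),
    (∀ x : A.domain, A x y = starRingEnd ℂ (w (x : X))) →
      ∃ hy : y ∈ A.domain, A ⟨y, hy⟩ = w)

/-- `(Ax, x) ≥ 0` for all `x ∈ dom A` (using the complex order). -/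
def IsPositiveOp {X : Type*} [NormedAddCommGroup X] [NormedSpace ℂ X]
    (A : X →ₗ.[ℂ] CDual X) : Prop :=
  ∀ x : A.domain, 0 ≤ A x (x : X)



lemma auxDenseInner {H : Type*} [NormedAddCommGroup H] [InnerProductSpace ℂ H]
    {s : Set H} (hs : Dense s) {u v : H} (h : ∀ x ∈ s, ⟪u, x⟫_ℂ = ⟪v, x⟫_ℂ) : u = v := by
  have hc : IsClosed {x : H | ⟪u - v, x⟫_ℂ = 0} :=
    isClosed_eq (continuous_const.inner continuous_id) continuous_const
  have hsub : s ⊆ {x : H | ⟪u - v, x⟫_ℂ = 0} := by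
    intro x hx
    simp [inner_sub_left, h x hx]
  have hall : ∀ x : H, ⟪u - v, x⟫_ℂ = 0 := by
    intro x
    have h2 : (Set.univ : Set H) ⊆ {x : H | ⟪u - v, x⟫_ℂ = 0} := by
      rw [← hs.closure_eq]
      exact closure_minimal hsub hc
    exact h2 (Set.mem_univ x)
  have h3 := hall (u - v)
  rw [inner_self_eq_zero, sub_eq_zero] at h3
  exact h3

lemma auxPolar {E F G : Type*} [AddCommGroup E] [Module ℂ E]
    [NormedAddCommGroup F] [InnerProductSpace ℂ F]
    [NormedAddCommGroup G] [InnerProductSpace ℂ G]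
    (S : E →ₗ[ℂ] F) (T : E →ₗ[ℂ] G) (h : ∀ v, ‖S v‖ = ‖T v‖) (y z : E) :
    ⟪S y, S z⟫_ℂ = ⟪T y, T z⟫_ℂ := by
  rw [inner_eq_sum_norm_sq_div_four, inner_eq_sum_norm_sq_div_four]
  simp only [← map_add, ← map_sub, ← map_smul, h]

/-- A, B positive self-adjoint operators from X to X* with
factorizations A = J_A J_A*, B = J_B J_B* via the auxiliary Hilbert spaces H_A, H_B
(completions of ran A, ran B with [Ax,Ay] = (Ax,y), encoded by the maps ΦA, ΦB).
The order relation "A ≥ B iff dom J_A* ⊆ dom J_B* and [J_A* y]² ≥ [J_B* y]² on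
dom J_A*" is antisymmetric: if A ≥ B and B ≥ A then A = B. -/
theorem statement11
    {X : Type*} [NormedAddCommGroup X] [NormedSpace ℂ X] [CompleteSpace X]
    {HA : Type*} [NormedAddCommGroup HA] [InnerProductSpace ℂ HA] [CompleteSpace HA]
    {HB : Type*} [NormedAddCommGroup HB] [InnerProductSpace ℂ HB] [CompleteSpace HB]
    (A : X →ₗ.[ℂ] CDual X) (hsaA : IsSelfAdjointOp A) (hposA : IsPositiveOp A)
    (B : X →ₗ.[ℂ] CDual X) (hsaB : IsSelfAdjointOp B) (hposB : IsPositiveOp B)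
    (ΦA : A.domain → HA) (hΦAdense : DenseRange ΦA)
    (hΦA : ∀ x y : A.domain, ⟪ΦA y, ΦA x⟫_ℂ = A x (y : X))
    (JA : HA →ₗ.[ℂ] CDual X)
    (hJAdom : ∀ h : HA, h ∈ JA.domain ↔ h ∈ Set.range ΦA)
    (hJAval : ∀ (x : A.domain) (hh : ΦA x ∈ JA.domain), JA ⟨ΦA x, hh⟩ = A x)
    (SA : X →ₗ.[ℂ] HA)
    (hSAdom : ∀ y : X, y ∈ SA.domain ↔
      ∃ k : HA, ∀ h : JA.domain, JA h y = ⟪k, (h : HA)⟫_ℂ)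
    (hSAval : ∀ (y : SA.domain) (h : JA.domain), JA h (y : X) = ⟪SA y, (h : HA)⟫_ℂ)
    (ΦB : B.domain → HB) (hΦBdense : DenseRange ΦB)
    (hΦB : ∀ x y : B.domain, ⟪ΦB y, ΦB x⟫_ℂ = B x (y : X))
    (JB : HB →ₗ.[ℂ] CDual X)
    (hJBdom : ∀ h : HB, h ∈ JB.domain ↔ h ∈ Set.range ΦB)
    (hJBval : ∀ (x : B.domain) (hh : ΦB x ∈ JB.domain), JB ⟨ΦB x, hh⟩ = B x)
    (SB : X →ₗ.[ℂ] HB)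
    (hSBdom : ∀ y : X, y ∈ SB.domain ↔
      ∃ k : HB, ∀ h : JB.domain, JB h y = ⟪k, (h : HB)⟫_ℂ)
    (hSBval : ∀ (y : SB.domain) (h : JB.domain), JB h (y : X) = ⟪SB y, (h : HB)⟫_ℂ)
    (hAgeB : (SA.domain : Set X) ⊆ (SB.domain : Set X))
    (hAgeB' : ∀ (y : X) (hyA : y ∈ SA.domain) (hyB : y ∈ SB.domain),
      ‖SB ⟨y, hyB⟩‖ ^ 2 ≤ ‖SA ⟨y, hyA⟩‖ ^ 2)
    (hBgeA : (SB.domain : Set X) ⊆ (SA.domain : Set X))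
    (hBgeA' : ∀ (y : X) (hyB : y ∈ SB.domain) (hyA : y ∈ SA.domain),
      ‖SA ⟨y, hyA⟩‖ ^ 2 ≤ ‖SB ⟨y, hyB⟩‖ ^ 2) :
    A = B := by
  have hle : SA.domain ≤ SB.domain := fun y hy => hAgeB hy
  have hle' : SB.domain ≤ SA.domain := fun y hy => hBgeA hy
  -- norms agree on the common domain
  have hnorm : ∀ v : SA.domain,
      ‖SA.toFun v‖ = ‖(SB.toFun.comp (Submodule.inclusion hle)) v‖ := by
    rintro ⟨y, hy⟩
    have h1 := hAgeB' y hy (hle hy)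
    have h2 := hBgeA' y (hle hy) hy
    have hn1 : (0:ℝ) ≤ ‖SA ⟨y, hy⟩‖ := norm_nonneg _
    have hn2 : (0:ℝ) ≤ ‖SB ⟨y, hle hy⟩‖ := norm_nonneg _
    have : ‖SA ⟨y, hy⟩‖ = ‖SB ⟨y, hle hy⟩‖ := by nlinarith
    exact this
  -- polarization: inner products agree on the common domain
  have hpol : ∀ (y z : X) (hyA : y ∈ SA.domain) (hzA : z ∈ SA.domain)
      (hyB : y ∈ SB.domain) (hzB : z ∈ SB.domain),
      ⟪SA ⟨y, hyA⟩, SA ⟨z, hzA⟩⟫_ℂ = ⟪SB ⟨y, hyB⟩, SB ⟨z, hzB⟩⟫_ℂ := by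
    intro y z hyA hzA hyB hzB
    exact auxPolar SA.toFun (SB.toFun.comp (Submodule.inclusion hle)) hnorm ⟨y, hyA⟩ ⟨z, hzA⟩
  -- J_A acts as inner product against Φ_A x
  have hJAcalc : ∀ (x : A.domain) (h : JA.domain), JA h (x : X) = ⟪ΦA x, (h : HA)⟫_ℂ := by
    intro x h
    obtain ⟨z, hz⟩ := (hJAdom h).mp h.2
    have hmem : ΦA z ∈ JA.domain := hz ▸ h.2
    have he : h = ⟨ΦA z, hmem⟩ := Subtype.ext hz.symm
    rw [he, hJAval z hmem]
    have h1 := hsaA.2.1 z x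
    have h2 := hΦA x z
    rw [h1, ← h2, inner_conj_symm]
  have hJBcalc : ∀ (x : B.domain) (h : JB.domain), JB h (x : X) = ⟪ΦB x, (h : HB)⟫_ℂ := by
    intro x h
    obtain ⟨z, hz⟩ := (hJBdom h).mp h.2
    have hmem : ΦB z ∈ JB.domain := hz ▸ h.2
    have he : h = ⟨ΦB z, hmem⟩ := Subtype.ext hz.symm
    rw [he, hJBval z hmem]
    have h1 := hsaB.2.1 z x
    have h2 := hΦB x z
    rw [h1, ← h2, inner_conj_symm]
  have hAdomSA : ∀ x : A.domain, (x : X) ∈ SA.domain := fun x =>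
    (hSAdom x).mpr ⟨ΦA x, fun h => hJAcalc x h⟩
  have hBdomSB : ∀ x : B.domain, (x : X) ∈ SB.domain := fun x =>
    (hSBdom x).mpr ⟨ΦB x, fun h => hJBcalc x h⟩
  have hSAeq : ∀ (x : A.domain) (hx : (x : X) ∈ SA.domain), SA ⟨x, hx⟩ = ΦA x := by
    intro x hx
    apply auxDenseInner hΦAdense
    intro k hk
    have hkmem : k ∈ JA.domain := (hJAdom k).mpr hk
    have e1 := hSAval ⟨x, hx⟩ ⟨k, hkmem⟩
    have e2 := hJAcalc x ⟨k, hkmem⟩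
    rw [← e1, e2]
  have hSBeq : ∀ (x : B.domain) (hx : (x : X) ∈ SB.domain), SB ⟨x, hx⟩ = ΦB x := by
    intro x hx
    apply auxDenseInner hΦBdense
    intro k hk
    have hkmem : k ∈ JB.domain := (hJBdom k).mpr hk
    have e1 := hSBval ⟨x, hx⟩ ⟨k, hkmem⟩
    have e2 := hJBcalc x ⟨k, hkmem⟩
    rw [← e1, e2]
  have hAval : ∀ (x : A.domain) (y : X) (hy : y ∈ SA.domain),
      A x y = ⟪SA ⟨y, hy⟩, SA ⟨(x : X), hAdomSA x⟩⟫_ℂ := by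
    intro x y hy
    have hmem : ΦA x ∈ JA.domain := (hJAdom _).mpr ⟨x, rfl⟩
    have e1 := hSAval ⟨y, hy⟩ ⟨ΦA x, hmem⟩
    have e2 := hJAval x hmem
    rw [hSAeq x (hAdomSA x), ← e2]
    exact e1
  have hBval : ∀ (x : B.domain) (y : X) (hy : y ∈ SB.domain),
      B x y = ⟪SB ⟨y, hy⟩, SB ⟨(x : X), hBdomSB x⟩⟫_ℂ := by
    intro x y hy
    have hmem : ΦB x ∈ JB.domain := (hJBdom _).mpr ⟨x, rfl⟩
    have e1 := hSBval ⟨y, hy⟩ ⟨ΦB x, hmem⟩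
    have e2 := hJBval x hmem
    rw [hSBeq x (hBdomSB x), ← e2]
    exact e1
  -- A ⊆ B via maximality of B
  have hAB : ∀ x : A.domain, ∃ hx : (x : X) ∈ B.domain, B ⟨(x : X), hx⟩ = A x := by
    intro x
    apply hsaB.2.2 (x : X) (A x)
    intro z
    have hzSB : (z : X) ∈ SB.domain := hBdomSB z
    have hzSA : (z : X) ∈ SA.domain := hle' hzSB
    have hxSA : (x : X) ∈ SA.domain := hAdomSA x
    have hxSB : (x : X) ∈ SB.domain := hle hxSA
    have e1 := hBval z (x : X) hxSB
    have e2 := hAval x (z : X) hzSA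
    calc B z (x : X) = ⟪SB ⟨(x : X), hxSB⟩, SB ⟨(z : X), hzSB⟩⟫_ℂ := e1
      _ = ⟪SA ⟨(x : X), hxSA⟩, SA ⟨(z : X), hzSA⟩⟫_ℂ := (hpol _ _ hxSA hzSA hxSB hzSB).symm
      _ = starRingEnd ℂ ⟪SA ⟨(z : X), hzSA⟩, SA ⟨(x : X), hxSA⟩⟫_ℂ :=
            (inner_conj_symm _ _).symm
      _ = starRingEnd ℂ (A x (z : X)) := by rw [e2]
  -- B ⊆ A via maximality of A
  have hBA : ∀ x : B.domain, ∃ hx : (x : X) ∈ A.domain, A ⟨(x : X), hx⟩ = B x := by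
    intro x
    apply hsaA.2.2 (x : X) (B x)
    intro z
    have hzSA : (z : X) ∈ SA.domain := hAdomSA z
    have hzSB : (z : X) ∈ SB.domain := hle hzSA
    have hxSB : (x : X) ∈ SB.domain := hBdomSB x
    have hxSA : (x : X) ∈ SA.domain := hle' hxSB
    have e1 := hAval z (x : X) hxSA
    have e2 := hBval x (z : X) hzSB
    calc A z (x : X) = ⟪SA ⟨(x : X), hxSA⟩, SA ⟨(z : X), hzSA⟩⟫_ℂ := e1
      _ = ⟪SB ⟨(x : X), hxSB⟩, SB ⟨(z : X), hzSB⟩⟫_ℂ := hpol _ _ hxSA hzSA hxSB hzSB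
      _ = starRingEnd ℂ ⟪SB ⟨(z : X), hzSB⟩, SB ⟨(x : X), hxSB⟩⟫_ℂ :=
            (inner_conj_symm _ _).symm
      _ = starRingEnd ℂ (B x (z : X)) := by rw [e2]
  have hdomAB : A.domain = B.domain := by
    apply le_antisymm
    · intro x hx
      obtain ⟨h, _⟩ := hAB ⟨x, hx⟩
      exact h
    · intro x hx
      obtain ⟨h, _⟩ := hBA ⟨x, hx⟩
      exact h
  apply LinearPMap.ext hdomAB
  intro x hxA hxB
  obtain ⟨hx, hBx⟩ := hAB ⟨x, hxA⟩
  exact hBx.symm
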